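/- Let ℓ ≥ 1, 0 < a < b, α ∈ ℝ, and let u ∈ ℝ^ℓ be a unit vector. If f_1(a) ⊆ H⁻(α,u) and f_1(b) ⊆ H⁺(α,u), then u_1 > ∑_{i=2}^ℓ |u_i|. -/

import Mathlib

open MeasureTheory

noncomputable section

/-- The hyperplane `H(α,u) = {x : ⟨x,u⟩ = α}` in `ℝ^ℓ`. -/
def Hplane (ℓ : ℕ) (α : ℝ) (u : EuclideanSpace ℝ (Fin ℓ)) : Set (EuclideanSpace ℝ (Fin ℓ)) :=
  {x | (inner ℝ x u : ℝ) = α}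

/-- The closed half-space `H⁻(α,u) = {x : ⟨x,u⟩ ≤ α}`. -/
def Hminus (ℓ : ℕ) (α : ℝ) (u : EuclideanSpace ℝ (Fin ℓ)) : Set (EuclideanSpace ℝ (Fin ℓ)) :=
  {x | (inner ℝ x u : ℝ) ≤ α}

/-- The closed half-space `H⁺(α,u) = {x : ⟨x,u⟩ ≥ α}`. -/
def Hplus (ℓ : ℕ) (α : ℝ) (u : EuclideanSpace ℝ (Fin ℓ)) : Set (EuclideanSpace ℝ (Fin ℓ)) :=
  {x | α ≤ (inner ℝ x u : ℝ)}

/-- The hyperplane `H(α,u)` separates the sets `A` and `B`. -/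
def Separates {ℓ : ℕ} (A B : Set (EuclideanSpace ℝ (Fin ℓ))) (α : ℝ)
    (u : EuclideanSpace ℝ (Fin ℓ)) : Prop :=
  (A ⊆ Hplus ℓ α u ∧ B ⊆ Hminus ℓ α u) ∨ (A ⊆ Hminus ℓ α u ∧ B ⊆ Hplus ℓ α u)

/-- The facet `f_i(c) = {x : x_i = c, |x_j| ≤ c for j ≠ i}` of the cube `[−c,c]^ℓ`. -/
def facetBase (ℓ : ℕ) (i : Fin ℓ) (c : ℝ) : Set (EuclideanSpace ℝ (Fin ℓ)) :=
  {x | x i = c ∧ ∀ j, j ≠ i → |x j| ≤ c}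

/-- The `2ℓ` facets of the cube `[−c,c]^ℓ`, indexed by `Fin ℓ ⊕ Fin ℓ`:
`Sum.inl i` is `f_i(c)` and `Sum.inr i` is `f_{i+ℓ}(c) = −f_i(c)`. -/
def facet (ℓ : ℕ) (i : Fin ℓ ⊕ Fin ℓ) (c : ℝ) : Set (EuclideanSpace ℝ (Fin ℓ)) :=
  match i with
  | Sum.inl i => facetBase ℓ i c
  | Sum.inr i => (fun x => -x) '' facetBase ℓ i c

/-- The unit sphere `S^{ℓ−1}` in `ℝ^ℓ`. -/
abbrev unitSphere (ℓ : ℕ) : Set (EuclideanSpace ℝ (Fin ℓ)) :=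
  Metric.sphere (0 : EuclideanSpace ℝ (Fin ℓ)) 1

/-- `Ĝ_i(a,b)`: the set of parameters `(α,u) ∈ [0,∞) × S^{ℓ−1}` such that `H(α,u)`
separates `f_i(a)` and `f_i(b)`. -/
def Ghat (ℓ : ℕ) (i : Fin ℓ ⊕ Fin ℓ) (a b : ℝ) : Set (ℝ × unitSphere ℓ) :=
  {p | 0 ≤ p.1 ∧ Separates (facet ℓ i a) (facet ℓ i b) p.1 (p.2 : EuclideanSpace ℝ (Fin ℓ))}

/-- The hyperplane measure `μ = γ·(λ ⊗ θ)` on `ℝ × S^{ℓ−1}`. -/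
def hypMeasure (ℓ : ℕ) (γ : ℝ) (θ : Measure (unitSphere ℓ)) : Measure (ℝ × unitSphere ℓ) :=
  ENNReal.ofReal γ • ((volume : Measure ℝ).prod θ)


lemma my_sign_mul_self (t : ℝ) : Real.sign t * t = |t| := by
  rcases lt_trichotomy t 0 with h|h|h
  · rw [Real.sign_of_neg h, abs_of_neg h]; ring
  · simp [h]
  · rw [Real.sign_of_pos h, abs_of_pos h]; ring

lemma my_abs_sign_le (t : ℝ) : |Real.sign t| ≤ 1 := by
  rcases lt_trichotomy t 0 with h|h|h
  · rw [Real.sign_of_neg h]; norm_num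
  · simp [h]
  · rw [Real.sign_of_pos h]; norm_num

/-- If the hyperplane `H(α,u)` (with `u` a unit vector) has `f_1(a) ⊆ H⁻(α,u)` and
`f_1(b) ⊆ H⁺(α,u)` for `0 < a < b`, then `u_1 > ∑_{i=2}^ℓ |u_i|`. -/
theorem stmt6 (ℓ : ℕ) (hℓ : 0 < ℓ) (a b : ℝ) (ha : 0 < a) (hab : a < b)
    (α : ℝ) (u : EuclideanSpace ℝ (Fin ℓ)) (hu : ‖u‖ = 1)
    (h1 : facetBase ℓ ⟨0, hℓ⟩ a ⊆ Hminus ℓ α u)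
    (h2 : facetBase ℓ ⟨0, hℓ⟩ b ⊆ Hplus ℓ α u) :
    (∑ i ∈ Finset.univ.erase ⟨0, hℓ⟩, |u i|) < u ⟨0, hℓ⟩ := by
  set i0 : Fin ℓ := ⟨0, hℓ⟩ with hi0
  set S := ∑ i ∈ Finset.univ.erase i0, |u i| with hSdef
  have hS0 : 0 ≤ S := Finset.sum_nonneg fun i _ => abs_nonneg _
  have hb : (0:ℝ) < b := ha.trans hab
  -- point in facetBase a maximizing inner product
  set xA : EuclideanSpace ℝ (Fin ℓ) :=
    WithLp.toLp 2 (fun i => if i = i0 then a else a * Real.sign (u i)) with hxA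
  have hxAmem : xA ∈ facetBase ℓ i0 a := by
    constructor
    · simp [hxA]
    · intro j hj
      simp only [hxA, PiLp.toLp_apply, if_neg hj]
      rw [abs_mul, abs_of_pos ha]
      calc a * |Real.sign (u j)| ≤ a * 1 :=
            mul_le_mul_of_nonneg_left (my_abs_sign_le _) ha.le
        _ = a := mul_one a
  have hinnerA : (inner ℝ xA u : ℝ) = a * u i0 + a * S := by
    have hip : (inner ℝ xA u : ℝ) = ∑ i, xA i * u i := by
      rw [PiLp.inner_apply]; simp [RCLike.inner_apply, mul_comm]
    have hsum : ∑ j ∈ Finset.univ.erase i0, xA j * u j = a * S := by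
      rw [hSdef, Finset.mul_sum]
      apply Finset.sum_congr rfl
      intro j hj
      have hj' : j ≠ i0 := Finset.ne_of_mem_erase hj
      simp only [hxA, PiLp.toLp_apply, if_neg hj']
      rw [mul_assoc, my_sign_mul_self]
    rw [hip, ← Finset.add_sum_erase _ (fun i => xA i * u i) (Finset.mem_univ i0), hsum]
    simp [hxA]
  have hA : a * u i0 + a * S ≤ α := by
    have := h1 hxAmem
    rwa [Hminus, Set.mem_setOf_eq, hinnerA] at this
  -- point in facetBase b minimizing inner product
  set xB : EuclideanSpace ℝ (Fin ℓ) :=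
    WithLp.toLp 2 (fun i => if i = i0 then b else -(b * Real.sign (u i))) with hxB
  have hxBmem : xB ∈ facetBase ℓ i0 b := by
    constructor
    · simp [hxB]
    · intro j hj
      simp only [hxB, PiLp.toLp_apply, if_neg hj]
      rw [abs_neg, abs_mul, abs_of_pos hb]
      calc b * |Real.sign (u j)| ≤ b * 1 :=
            mul_le_mul_of_nonneg_left (my_abs_sign_le _) hb.le
        _ = b := mul_one b
  have hinnerB : (inner ℝ xB u : ℝ) = b * u i0 - b * S := by
    have hip : (inner ℝ xB u : ℝ) = ∑ i, xB i * u i := by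
      rw [PiLp.inner_apply]; simp [RCLike.inner_apply, mul_comm]
    have hsum : ∑ j ∈ Finset.univ.erase i0, xB j * u j = -(b * S) := by
      rw [hSdef, Finset.mul_sum, ← Finset.sum_neg_distrib]
      apply Finset.sum_congr rfl
      intro j hj
      have hj' : j ≠ i0 := Finset.ne_of_mem_erase hj
      simp only [hxB, PiLp.toLp_apply, if_neg hj']
      rw [neg_mul, mul_assoc, my_sign_mul_self]
    rw [hip, ← Finset.add_sum_erase _ (fun i => xB i * u i) (Finset.mem_univ i0), hsum]
    simp [hxB, sub_eq_add_neg]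
  have hB : α ≤ b * u i0 - b * S := by
    have := h2 hxBmem
    rwa [Hplus, Set.mem_setOf_eq, hinnerB] at this
  have hkey : a * u i0 + a * S ≤ b * u i0 - b * S := hA.trans hB
  rcases hS0.lt_or_eq with hSpos | hSzero
  · nlinarith
  · -- S = 0 : all other coordinates vanish, so u i0 = ±1, and ≥ 0
    have hu0nonneg : 0 ≤ u i0 := by nlinarith
    have hune : u ≠ 0 := by
      intro h; rw [h, norm_zero] at hu; linarith
    have hzero : ∀ j ∈ Finset.univ.erase i0, |u j| = 0 := by
      intro j hj
      have := (Finset.sum_eq_zero_iff_of_nonneg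
        (fun i _ => abs_nonneg (u i))).1 hSzero.symm
      exact this j hj
    have hu0ne : u i0 ≠ 0 := by
      intro h0
      apply hune
      ext j
      by_cases hji : j = i0
      · rw [hji]; exact h0
      · have := hzero j (Finset.mem_erase.2 ⟨hji, Finset.mem_univ j⟩)
        exact abs_eq_zero.1 this
    rw [← hSzero]
    exact lt_of_le_of_ne hu0nonneg (Ne.symm hu0ne)


end
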